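/- Assume the sequence e is symmetric, i.e. e_i = e_{m+1−i} for i = 1, …, m. Then D(α(d,i)) = D(α(d,m−i)) for all 0 ≤ i ≤ m. (The Betti numbers of the self-dual pure complex F(d) of Proposition 3.5 satisfy β_i = β_{m−i}, since complementary partitions in a rectangle give Schur modules of equal dimension.) -/

import Mathlib

/-- `lam m d j` is `λ_j = e_0 + Σ_{k=j+1}^m (e_k - 1)` where `e_0 = d 0` and
`e_k = d k - d (k-1)`. -/
def lam (m : ℕ) (d : ℕ → ℤ) (j : ℕ) : ℤ :=
  d 0 + ∑ k ∈ Finset.Ioc j m, (d k - d (k - 1) - 1)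

/-- `alpha m d i j` is the `j`-th entry (for `1 ≤ j ≤ m`) of the partition `α(d,i)`. -/
def alpha (m : ℕ) (d : ℕ → ℤ) (i j : ℕ) : ℤ :=
  lam m d j + if j ≤ i then d j - d (j - 1) else 0

/-- The Weyl dimension `D(α) = ∏_{1 ≤ p < q ≤ m} (α_p - α_q + q - p)/(q - p)`. -/
def weylDim (m : ℕ) (a : ℕ → ℤ) : ℚ :=
  ∏ p ∈ Finset.Icc 1 m, ∏ q ∈ Finset.Ioc p m,
    (((a p : ℚ) - (a q : ℚ) + (q : ℚ) - (p : ℚ)) / ((q : ℚ) - (p : ℚ)))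

lemma telescope_sum (m : ℕ) (d : ℕ → ℤ) :
    ∑ k ∈ Finset.Icc 1 m, (d k - d (k - 1)) = d m - d 0 := by
  induction m with
  | zero => simp
  | succ n ih =>
    rw [Finset.sum_Icc_succ_top (by omega), ih]
    simp only [Nat.add_sub_cancel]
    ring

lemma sum_g (m : ℕ) (d : ℕ → ℤ) :
    ∑ k ∈ Finset.Icc 1 m, (d k - d (k - 1) - 1) = d m - d 0 - m := by
  rw [Finset.sum_sub_distrib, telescope_sum, Finset.sum_const, Nat.card_Icc]
  simp

/-- reflection of the tail sum, using symmetry of `e`. -/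
lemma reflect_sum (m : ℕ) (d : ℕ → ℤ)
    (hsym : ∀ i, 1 ≤ i → i ≤ m → d i - d (i - 1) = d (m + 1 - i) - d (m - i))
    (j : ℕ) (hj1 : 1 ≤ j) (hjm : j ≤ m) :
    ∑ k ∈ Finset.Ioc (m + 1 - j) m, (d k - d (k - 1) - 1)
      = ∑ k ∈ Finset.Icc 1 (j - 1), (d k - d (k - 1) - 1) := by
  refine Finset.sum_nbij' (fun k => m + 1 - k) (fun k => m + 1 - k) ?_ ?_ ?_ ?_ ?_
  · intro k hk
    simp only [Finset.mem_Ioc, Finset.mem_Icc] at *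
    omega
  · intro k hk
    simp only [Finset.mem_Ioc, Finset.mem_Icc] at *
    omega
  · intro k hk
    simp only [Finset.mem_Ioc] at hk
    omega
  · intro k hk
    simp only [Finset.mem_Icc] at hk
    omega
  · intro k hk
    simp only [Finset.mem_Ioc] at hk
    have h := hsym k (by omega) (by omega)
    have hh : m + 1 - k - 1 = m - k := by omega
    rw [hh]
    omega

lemma split_sum (m : ℕ) (d : ℕ → ℤ) (j : ℕ) (hj1 : 1 ≤ j) (hjm : j ≤ m) :
    ∑ k ∈ Finset.Icc 1 (j - 1), (d k - d (k - 1) - 1)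
      + (d j - d (j - 1) - 1)
      + ∑ k ∈ Finset.Ioc j m, (d k - d (k - 1) - 1)
      = ∑ k ∈ Finset.Icc 1 m, (d k - d (k - 1) - 1) := by
  have h1 : Finset.Icc 1 (j - 1) = Finset.Ioc 0 (j - 1) := by
    ext x; simp [Finset.mem_Icc, Finset.mem_Ioc]; omega
  have h2 : Finset.Icc 1 m = Finset.Ioc 0 m := by
    ext x; simp [Finset.mem_Icc, Finset.mem_Ioc]; omega
  have h3 : Finset.Ioc (j - 1) j = {j} := by
    ext x; simp [Finset.mem_Ioc]; omega
  rw [h1, h2]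
  have s1 : ∑ k ∈ Finset.Ioc 0 (j - 1), (d k - d (k - 1) - 1)
      + ∑ k ∈ Finset.Ioc (j - 1) j, (d k - d (k - 1) - 1)
      = ∑ k ∈ Finset.Ioc 0 j, (d k - d (k - 1) - 1) :=
    Finset.sum_Ioc_consecutive _ (by omega) (by omega)
  have s2 : ∑ k ∈ Finset.Ioc 0 j, (d k - d (k - 1) - 1)
      + ∑ k ∈ Finset.Ioc j m, (d k - d (k - 1) - 1)
      = ∑ k ∈ Finset.Ioc 0 m, (d k - d (k - 1) - 1) :=
    Finset.sum_Ioc_consecutive _ (by omega) (by omega)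
  rw [h3] at s1
  simp only [Finset.sum_singleton] at s1
  omega

/-- The key pointwise identity: entries of `α(d,m-i)` and the reversed `α(d,i)` are
complementary in a rectangle. -/
lemma alpha_complementary (m : ℕ) (d : ℕ → ℤ)
    (hsym : ∀ i, 1 ≤ i → i ≤ m → d i - d (i - 1) = d (m + 1 - i) - d (m - i))
    (i : ℕ) (hi : i ≤ m) (j : ℕ) (hj1 : 1 ≤ j) (hjm : j ≤ m) :
    alpha m d (m - i) j + alpha m d i (m + 1 - j) = d 0 + d m - m + 1 := by
  have hlam : lam m d j + lam m d (m + 1 - j) + (d j - d (j - 1))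
      = d 0 + d m - m + 1 := by
    unfold lam
    rw [reflect_sum m d hsym j hj1 hjm]
    have := split_sum m d j hj1 hjm
    have := sum_g m d
    omega
  have he : d j - d (j - 1) = d (m + 1 - j) - d (m + 1 - j - 1) := by
    have h := hsym j hj1 hjm
    have : m + 1 - j - 1 = m - j := by omega
    rw [this]; exact h
  unfold alpha
  by_cases hcase : j ≤ m - i
  · have hnot : ¬ (m + 1 - j ≤ i) := by omega
    rw [if_pos hcase, if_neg hnot]
    omega
  · have hyes : m + 1 - j ≤ i := by omega
    rw [if_neg hcase, if_pos hyes, ← he]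
    omega

/-- Weyl dimension is invariant under reversing and complementing in a rectangle. -/
lemma weylDim_reflect (m : ℕ) (a b : ℕ → ℤ) (C : ℤ)
    (h : ∀ j, 1 ≤ j → j ≤ m → b j + a (m + 1 - j) = C) :
    weylDim m b = weylDim m a := by
  unfold weylDim
  rw [Finset.prod_sigma' (Finset.Icc 1 m) (fun p => Finset.Ioc p m),
    Finset.prod_sigma' (Finset.Icc 1 m) (fun p => Finset.Ioc p m)]
  refine Finset.prod_nbij' (fun x => ⟨m + 1 - x.2, m + 1 - x.1⟩)
    (fun x => ⟨m + 1 - x.2, m + 1 - x.1⟩) ?_ ?_ ?_ ?_ ?_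
  · rintro ⟨p, q⟩ hx
    simp only [Finset.mem_sigma, Finset.mem_Icc, Finset.mem_Ioc] at *
    omega
  · rintro ⟨p, q⟩ hx
    simp only [Finset.mem_sigma, Finset.mem_Icc, Finset.mem_Ioc] at *
    omega
  · rintro ⟨p, q⟩ hx
    simp only [Finset.mem_sigma, Finset.mem_Icc, Finset.mem_Ioc] at hx
    simp only [Sigma.mk.inj_iff]
    constructor
    · omega
    · exact heq_of_eq (by omega)
  · rintro ⟨p, q⟩ hx
    simp only [Finset.mem_sigma, Finset.mem_Icc, Finset.mem_Ioc] at hx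
    simp only [Sigma.mk.inj_iff]
    constructor
    · omega
    · exact heq_of_eq (by omega)
  · rintro ⟨p, q⟩ hx
    simp only [Finset.mem_sigma, Finset.mem_Icc, Finset.mem_Ioc] at hx
    have hp := h p (by omega) (by omega)
    have hq := h q (by omega) (by omega)
    have hbp : (b p : ℚ) = (C : ℚ) - (a (m + 1 - p) : ℚ) := by
      have : (b p : ℚ) + (a (m + 1 - p) : ℚ) = (C : ℚ) := by exact_mod_cast hp
      linarith
    have hbq : (b q : ℚ) = (C : ℚ) - (a (m + 1 - q) : ℚ) := by
      have : (b q : ℚ) + (a (m + 1 - q) : ℚ) = (C : ℚ) := by exact_mod_cast hq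
      linarith
    have hcp : ((m + 1 - p : ℕ) : ℚ) = (m : ℚ) + 1 - (p : ℚ) := by
      rw [Nat.cast_sub (by omega)]; push_cast; ring
    have hcq : ((m + 1 - q : ℕ) : ℚ) = (m : ℚ) + 1 - (q : ℚ) := by
      rw [Nat.cast_sub (by omega)]; push_cast; ring
    simp only [hbp, hbq, hcp, hcq]
    ring_nf

theorem weylDim_symmetric_of_symmetric (m : ℕ) (hm : 1 ≤ m)
    (d : ℕ → ℤ) (hd : ∀ i < m, d i < d (i + 1))
    (hsym : ∀ i, 1 ≤ i → i ≤ m → d i - d (i - 1) = d (m + 1 - i) - d (m - i)) :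
    ∀ i ≤ m, weylDim m (alpha m d i) = weylDim m (alpha m d (m - i)) := by
  intro i hi
  exact (weylDim_reflect m (alpha m d i) (alpha m d (m - i)) (d 0 + d m - m + 1)
    (fun j hj1 hjm => alpha_complementary m d hsym i hi j hj1 hjm)).symm
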